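/- Let X be a real-valued random variable with distribution F ∈ 𝒟 whose tail is positive everywhere, let Θ be a non-negative random variable, non-degenerate at zero, with distribution G, and let H be the distribution of the product ΘX. If Assumption A3' holds and \bar G(cx) = o(\bar H(x)) as x→∞ for every constant c>0, then H ∈ 𝒟 and L_H ≥ L_F. -/

import Mathlib

open MeasureTheory ProbabilityTheory Filter Topology Set

noncomputable section

namespace RWS

variable {Ω : Type} [MeasurableSpace Ω]

/-- The probability of an event, as a real number. -/
def pr (μ : Measure Ω) (s : Set Ω) : ℝ := (μ s).toReal

/-- The tail function `x ↦ P[X > x]` of a real-valued random variable `X`. -/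
def tail (μ : Measure Ω) (X : Ω → ℝ) (x : ℝ) : ℝ := pr μ {ω | X ω > x}

/-- The support of (the distribution of) a real-valued random variable. -/
def supp (μ : Measure Ω) (Θ : Ω → ℝ) : Set ℝ :=
  {θ : ℝ | ∀ δ > 0, 0 < μ {ω | Θ ω ∈ Icc (θ - δ) (θ + δ)}}

/-- `Θ` is non-degenerate at zero. -/
def NonDegAtZero (μ : Measure Ω) (Θ : Ω → ℝ) : Prop := 0 < μ {ω | Θ ω ≠ 0}

/-- `c` is the conditional probability of the event `A` given `Θ = θ`, defined as the limit
as `δ ↓ 0` of the probability of `A` conditioned on `Θ ∈ [θ-δ, θ+δ]`. -/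
def IsCondProb (μ : Measure Ω) (Θ : Ω → ℝ) (A : Set Ω) (θ c : ℝ) : Prop :=
  Tendsto (fun δ : ℝ =>
      pr μ (A ∩ {ω | Θ ω ∈ Icc (θ - δ) (θ + δ)}) / pr μ {ω | Θ ω ∈ Icc (θ - δ) (θ + δ)})
    (nhdsWithin 0 (Ioi 0)) (nhds c)

/-- `c` is the conditional probability of `A` given `Θi = θi, Θj = θj`, defined as the limit
as `δ ↓ 0` of the probability of `A` conditioned on `Θi ∈ [θi-δ, θi+δ], Θj ∈ [θj-δ, θj+δ]`. -/
def IsCondProb2 (μ : Measure Ω) (Θi Θj : Ω → ℝ) (A : Set Ω) (θi θj c : ℝ) : Prop :=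
  Tendsto (fun δ : ℝ =>
      pr μ (A ∩ {ω | Θi ω ∈ Icc (θi - δ) (θi + δ) ∧ Θj ω ∈ Icc (θj - δ) (θj + δ)}) /
        pr μ {ω | Θi ω ∈ Icc (θi - δ) (θi + δ) ∧ Θj ω ∈ Icc (θj - δ) (θj + δ)})
    (nhdsWithin 0 (Ioi 0)) (nhds c)

/-- The distribution of `X` under `μ` has a dominatedly varying tail (class `𝒟`). -/
def DomVar (μ : Measure Ω) (X : Ω → ℝ) : Prop :=
  ∀ b ∈ Ioo (0:ℝ) 1,
    IsBoundedUnder (· ≤ ·) atTop (fun x => tail μ X (b * x) / tail μ X x)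

/-- The distribution of `X` under `μ` is long-tailed (class `ℒ`). -/
def LongTail (μ : Measure Ω) (X : Ω → ℝ) : Prop :=
  ∀ a > (0:ℝ), Tendsto (fun x => tail μ X (x - a) / tail μ X x) atTop (nhds 1)

/-- The distribution of `X` under `μ` is consistently varying (class `𝒞`). -/
def ConsVar (μ : Measure Ω) (X : Ω → ℝ) : Prop :=
  Tendsto (fun v : ℝ => limsup (fun x => tail μ X (v * x) / tail μ X x) atTop)
    (nhdsWithin 1 (Iio 1)) (nhds 1)

/-- The distribution of `X` under `μ` is regularly varying with index `-α` (class `ℛ₋α`). -/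
def RegVar (μ : Measure Ω) (X : Ω → ℝ) (α : ℝ) : Prop :=
  ∀ b > (0:ℝ), Tendsto (fun x => tail μ X (b * x) / tail μ X x) atTop (nhds (b ^ (-α)))

/-- The `L`-index `L_F = lim_{v↓1} liminf_{x→∞} F̄(vx)/F̄(x)` of the distribution of `X`. -/
def Lindex (μ : Measure Ω) (X : Ω → ℝ) : ℝ :=
  limUnder (nhdsWithin 1 (Ioi 1))
    (fun v => liminf (fun x => tail μ X (v * x) / tail μ X x) atTop)

/-- `Xi` and `Xj` are tail asymptotically independent:
`P[|Xi| > xi | Xj > xj] → 0` as `xi ∧ xj → ∞`. -/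
def TAIpair (μ : Measure Ω) (Xi Xj : Ω → ℝ) : Prop :=
  Tendsto (fun p : ℝ × ℝ =>
      pr μ {ω | |Xi ω| > p.1 ∧ Xj ω > p.2} / pr μ {ω | Xj ω > p.2})
    (atTop ×ˢ atTop) (nhds 0)

/-- `Xi` and `Xj` are quasi-asymptotically independent. -/
def QAIpair (μ : Measure Ω) (Xi Xj : Ω → ℝ) : Prop :=
  Tendsto (fun x : ℝ =>
      pr μ {ω | max (Xi ω) 0 > x ∧ max (Xj ω) 0 > x} / (tail μ Xi x + tail μ Xj x))
    atTop (nhds 0) ∧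
  Tendsto (fun x : ℝ =>
      pr μ {ω | max (-Xi ω) 0 > x ∧ Xj ω > x} / (tail μ Xi x + tail μ Xj x))
    atTop (nhds 0)

/-- The requirements on an auxiliary function `b` from Assumption A1:
`b > 0`, `b(x) → ∞` and `b(x)/x → 0`. -/
def A1fun (b : ℝ → ℝ) : Prop :=
  (∀ x, 0 < b x) ∧ Tendsto b atTop atTop ∧ Tendsto (fun x => b x / x) atTop (nhds 0)

/-- The little-o condition of Assumption A1 for the ordered pair `(Xi, Θi), (Xj, Θj)`:
`P[Θi > bi(xi)] = o(P[Θi Xi > xi, Θj Xj > xj])` as `xi ∧ xj → ∞`. -/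
def A1pair (μ : Measure Ω) (Xi Θi Xj Θj : Ω → ℝ) (bi : ℝ → ℝ) : Prop :=
  Tendsto (fun p : ℝ × ℝ =>
      pr μ {ω | Θi ω > bi p.1} /
        pr μ {ω | Θi ω * Xi ω > p.1 ∧ Θj ω * Xj ω > p.2})
    (atTop ×ˢ atTop) (nhds 0)

/-- Assumption A2 for an ordered pair, with function `gij`:
`P[|Xi| > xi, Xj > xj | Θi = θi, Θj = θj] ~ gij(θi,θj) ⬝ P[|Xi| > xi, Xj > xj]`
as `xi ∧ xj → ∞`, uniformly over the supports. -/
def A2pair (μ : Measure Ω) (Xi Θi Xj Θj : Ω → ℝ) (gij : ℝ → ℝ → ℝ) : Prop :=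
  Measurable (Function.uncurry gij) ∧
  (∀ θi θj : ℝ, 0 ≤ θi → 0 ≤ θj → 0 < gij θi θj) ∧
  ∃ cp : ℝ → ℝ → ℝ → ℝ → ℝ,
    (∀ θi ∈ supp μ Θi, ∀ θj ∈ supp μ Θj, ∀ xi xj : ℝ,
      IsCondProb2 μ Θi Θj {ω | |Xi ω| > xi ∧ Xj ω > xj} θi θj (cp θi θj xi xj)) ∧
    TendstoUniformlyOn
      (fun (x : ℝ × ℝ) (θ : ℝ × ℝ) =>
        cp θ.1 θ.2 x.1 x.2 / (gij θ.1 θ.2 * pr μ {ω | |Xi ω| > x.1 ∧ Xj ω > x.2}))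
      (fun _ => 1) (atTop ×ˢ atTop) (supp μ Θi ×ˢ supp μ Θj)

/-- Assumption A3 (A3') for a single pair `(X, Θ)` with function `h`:
`P[X > x | Θ = θ] ~ h(θ) ⬝ P[X > x]` as `x → ∞`, uniformly over the support of `Θ`. -/
def A3' (μ : Measure Ω) (X Θ : Ω → ℝ) (h : ℝ → ℝ) : Prop :=
  (∀ θ : ℝ, 0 ≤ θ → 0 < h θ) ∧
  ∃ cp : ℝ → ℝ → ℝ,
    (∀ θ ∈ supp μ Θ, ∀ x : ℝ, IsCondProb μ Θ {ω | X ω > x} θ (cp θ x)) ∧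
    TendstoUniformlyOn (fun (x : ℝ) (θ : ℝ) => cp θ x / (h θ * tail μ X x))
      (fun _ => 1) atTop (supp μ Θ)

/-- The additional two-sided uniform asymptotic bounds of Assumption A4, for one ordered
pair, with constants `L ≤ U`:
`L gij(θi,θj) P[Xi > xi, Xj > xj] ≲ P[Xi > xi, Xj > xj | Θi = θi, Θj = θj]
   ≲ U gij(θi,θj) P[Xi > xi, Xj > xj]` as `xi ∧ xj → ∞`, uniformly over the supports. -/
def A4pair (μ : Measure Ω) (Xi Θi Xj Θj : Ω → ℝ) (gij : ℝ → ℝ → ℝ) (L U : ℝ) : Prop :=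
  ∃ cp : ℝ → ℝ → ℝ → ℝ → ℝ,
    (∀ θi ∈ supp μ Θi, ∀ θj ∈ supp μ Θj, ∀ xi xj : ℝ,
      IsCondProb2 μ Θi Θj {ω | Xi ω > xi ∧ Xj ω > xj} θi θj (cp θi θj xi xj)) ∧
    ∀ ε > (0:ℝ), ∀ᶠ x : ℝ × ℝ in atTop ×ˢ atTop,
      ∀ θi ∈ supp μ Θi, ∀ θj ∈ supp μ Θj,
        (1 - ε) * (L * (gij θi θj * pr μ {ω | Xi ω > x.1 ∧ Xj ω > x.2})) ≤
            cp θi θj x.1 x.2 ∧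
          cp θi θj x.1 x.2 ≤
            (1 + ε) * (U * (gij θi θj * pr μ {ω | Xi ω > x.1 ∧ Xj ω > x.2}))

/-- Assumption A1 for a finite family. -/
def A1 (μ : Measure Ω) {n : ℕ} (X Θ : Fin n → Ω → ℝ) (b : Fin n → ℝ → ℝ) : Prop :=
  (∀ i, A1fun (b i)) ∧
  ∀ i j, i ≠ j → A1pair μ (X i) (Θ i) (X j) (Θ j) (b i)

/-- Assumption A2 for a finite family. -/
def A2 (μ : Measure Ω) {n : ℕ} (X Θ : Fin n → Ω → ℝ)
    (g : Fin n → Fin n → ℝ → ℝ → ℝ) : Prop :=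
  ∀ i j, i ≠ j → A2pair μ (X i) (Θ i) (X j) (Θ j) (g i j)

/-- Assumption A3 for a finite family. -/
def A3 (μ : Measure Ω) {n : ℕ} (X Θ : Fin n → Ω → ℝ) (h : Fin n → ℝ → ℝ) : Prop :=
  ∀ i, A3' μ (X i) (Θ i) (h i)

/-- Assumption A4 for a finite family. -/
def A4 (μ : Measure Ω) {n : ℕ} (X Θ : Fin n → Ω → ℝ)
    (g : Fin n → Fin n → ℝ → ℝ → ℝ) : Prop :=
  A2 μ X Θ g ∧
  ∃ L U : ℝ, 0 < L ∧ L ≤ U ∧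
    ∀ i j, i ≠ j → A4pair μ (X i) (Θ i) (X j) (Θ j) (g i j) L U

/-- Pairwise tail asymptotic independence of a finite family. -/
def pTAI (μ : Measure Ω) {n : ℕ} (X : Fin n → Ω → ℝ) : Prop :=
  ∀ i j, i ≠ j → TAIpair μ (X i) (X j)

/-- Pairwise quasi-asymptotic independence of a finite family. -/
def pQAI (μ : Measure Ω) {n : ℕ} (X : Fin n → Ω → ℝ) : Prop :=
  ∀ i j, i ≠ j → QAIpair μ (X i) (X j)

/-- The randomly weighted and stopped sum `S_N^Θ`. -/
def SNsum (Θs Xs : ℕ → Ω → ℝ) (N : Ω → ℕ) (ω : Ω) : ℝ :=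
  ∑ i ∈ Finset.range (N ω), Θs i ω * Xs i ω

/-- The randomly stopped maximum of weighted sums `S_(N)^Θ` (equal to `0` when `N = 0`). -/
def SNmax (Θs Xs : ℕ → Ω → ℝ) (N : Ω → ℕ) (ω : Ω) : ℝ :=
  ⨆ k ∈ Finset.range (N ω), ∑ i ∈ Finset.range (k + 1), Θs i ω * Xs i ω

/-- The randomly stopped maximum of weighted summands `X_(N)^Θ` (equal to `0` when `N = 0`). -/
def XNmax (Θs Xs : ℕ → Ω → ℝ) (N : Ω → ℕ) (ω : Ω) : ℝ :=
  ⨆ i ∈ Finset.range (N ω), Θs i ω * Xs i ω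


lemma supp_nonneg (μ : Measure Ω) {Θ : Ω → ℝ} (hΘnn : ∀ ω, 0 ≤ Θ ω) {θ : ℝ}
    (hθ : θ ∈ supp μ Θ) : 0 ≤ θ := by
  by_contra hneg
  push_neg at hneg
  have h := hθ (-θ/2) (by linarith)
  have he : {ω | Θ ω ∈ Icc (θ - -θ/2) (θ + -θ/2)} = ∅ := by
    ext ω; simp only [mem_setOf_eq, mem_Icc, mem_empty_iff_false, iff_false, not_and, not_le]
    intro _
    have := hΘnn ω; linarith
  rw [he] at h; simp at h


lemma map_compl_supp_null (μ : Measure Ω) {Θ : Ω → ℝ}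
    (hΘm : Measurable Θ) : μ.map Θ (supp μ Θ)ᶜ = 0 := by
  have hN : ∀ θ : ℝ, θ ∈ (supp μ Θ)ᶜ → ∃ δ > 0, μ.map Θ (Ioo (θ - δ) (θ + δ)) = 0 := by
    intro θ hθ
    simp only [mem_compl_iff, supp, mem_setOf_eq, not_forall] at hθ
    obtain ⟨δ, hδ, h0⟩ := hθ
    refine ⟨δ, hδ, ?_⟩
    rw [Measure.map_apply hΘm measurableSet_Ioo]
    have hsub : Θ ⁻¹' Ioo (θ - δ) (θ + δ) ⊆ {ω | Θ ω ∈ Icc (θ - δ) (θ + δ)} :=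
      fun ω hω => ⟨le_of_lt hω.1, le_of_lt hω.2⟩
    have h0' : μ {ω | Θ ω ∈ Icc (θ - δ) (θ + δ)} = 0 := by
      simpa only [not_lt, nonpos_iff_eq_zero] using h0
    exact le_antisymm (h0' ▸ measure_mono hsub) zero_le
  choose! δ hδpos hδ0 using hN
  set s : {θ : ℝ // θ ∈ (supp μ Θ)ᶜ} → Set ℝ :=
    fun θ => Ioo (θ.1 - δ θ.1) (θ.1 + δ θ.1) with hs
  obtain ⟨T, hTc, hTeq⟩ := TopologicalSpace.isOpen_iUnion_countable s (fun θ => isOpen_Ioo)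
  have hsub : (supp μ Θ)ᶜ ⊆ ⋃ θ ∈ T, s θ := by
    rw [hTeq]
    intro θ hθ
    refine mem_iUnion.2 ⟨⟨θ, hθ⟩, ?_⟩
    simp only [hs, mem_Ioo]
    have := hδpos θ hθ
    constructor <;> linarith
  refine le_antisymm (le_trans (measure_mono hsub) ?_) zero_le
  exact le_of_eq ((measure_biUnion_null_iff hTc).2 (fun θ _ => hδ0 θ.1 θ.2))


lemma ae_rnDeriv_eq (μ : Measure Ω) [IsProbabilityMeasure μ] {X Θ : Ω → ℝ}
    (hXm : Measurable X) (hΘm : Measurable Θ) {u : ℝ} {c : ℝ → ℝ}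
    (hcp : ∀ θ ∈ supp μ Θ, IsCondProb μ Θ {ω | X ω > u} θ (c θ)) :
    ∀ᵐ θ ∂(μ.map Θ), θ ∈ supp μ Θ →
      ((μ.restrict {ω | X ω > u}).map Θ).rnDeriv (μ.map Θ) θ = ENNReal.ofReal (c θ) ∧
        0 ≤ c θ := by
  set A : Set Ω := {ω | X ω > u} with hA
  have hAm : MeasurableSet A := measurableSet_lt measurable_const hXm
  set ρ : Measure ℝ := (μ.restrict A).map Θ with hρ
  set G : Measure ℝ := μ.map Θ with hG
  have hρfin : IsFiniteMeasure ρ := by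
    rw [hρ]; exact Measure.isFiniteMeasure_map _ _
  have hGfin : IsFiniteMeasure G := by
    rw [hG]; exact Measure.isFiniteMeasure_map _ _
  filter_upwards [Besicovitch.ae_tendsto_rnDeriv ρ G] with θ hlim hsupp
  -- basic identities
  have hIcc : ∀ δ : ℝ, Metric.closedBall θ δ = Icc (θ - δ) (θ + δ) := fun δ =>
    Real.closedBall_eq_Icc
  have hGapp : ∀ δ : ℝ, G (Metric.closedBall θ δ) = μ {ω | Θ ω ∈ Icc (θ - δ) (θ + δ)} := by
    intro δ
    rw [hIcc, hG, Measure.map_apply hΘm measurableSet_Icc]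
    rfl
  have hρapp : ∀ δ : ℝ, ρ (Metric.closedBall θ δ) = μ (A ∩ {ω | Θ ω ∈ Icc (θ - δ) (θ + δ)}) := by
    intro δ
    rw [hIcc, hρ, Measure.map_apply hΘm measurableSet_Icc,
      Measure.restrict_apply (hΘm measurableSet_Icc), inter_comm]
    rfl
  have hG0 : ∀ δ : ℝ, 0 < δ → G (Metric.closedBall θ δ) ≠ 0 := by
    intro δ hδ
    rw [hGapp]
    exact (hsupp δ hδ).ne'
  -- the real-valued ratio equals toReal of the ennreal ratio
  have heq : ∀ δ : ℝ,
      pr μ (A ∩ {ω | Θ ω ∈ Icc (θ - δ) (θ + δ)}) / pr μ {ω | Θ ω ∈ Icc (θ - δ) (θ + δ)} =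
        (ρ (Metric.closedBall θ δ) / G (Metric.closedBall θ δ)).toReal := by
    intro δ
    rw [ENNReal.toReal_div, hGapp, hρapp]
    rfl
  set D := ρ.rnDeriv G θ with hD
  have hD1 : D ≤ 1 := by
    refine le_of_tendsto hlim ?_
    filter_upwards [self_mem_nhdsWithin] with δ hδ
    refine ENNReal.div_le_of_le_mul ?_
    rw [one_mul]
    exact le_trans (by rw [hρapp, hGapp]; exact measure_mono inter_subset_right) le_rfl
  have hDne : D ≠ ⊤ := ne_top_of_le_ne_top ENNReal.one_ne_top hD1
  have htr : Tendsto (fun δ : ℝ =>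
      (ρ (Metric.closedBall θ δ) / G (Metric.closedBall θ δ)).toReal)
      (nhdsWithin 0 (Ioi 0)) (nhds D.toReal) :=
    (ENNReal.tendsto_toReal hDne).comp hlim
  have hcθ : c θ = D.toReal := by
    refine tendsto_nhds_unique ?_ htr
    have := hcp θ hsupp
    rw [IsCondProb] at this
    refine this.congr (fun δ => heq δ)
  constructor
  · rw [hcθ, ENNReal.ofReal_toReal hDne]
  · rw [hcθ]; exact ENNReal.toReal_nonneg


lemma key (μ : Measure Ω) [IsProbabilityMeasure μ] {X Θ : Ω → ℝ}
    (hXm : Measurable X) (hΘm : Measurable Θ) (hΘnn : ∀ ω, 0 ≤ Θ ω)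
    (hF : ∀ x : ℝ, 0 ≤ x → 0 < tail μ X x)
    {h : ℝ → ℝ} (hA3 : A3' μ X Θ h) {η : ℝ} (hη : 0 < η) :
    ∃ Y : ℝ, 1 ≤ Y ∧ ∀ u1 u2 : ℝ, Y ≤ u1 → Y ≤ u2 → ∀ S : Set ℝ, MeasurableSet S →
      μ ({ω | X ω > u1} ∩ Θ ⁻¹' S) ≤
        ENNReal.ofReal ((1 + η) * (tail μ X u1 / tail μ X u2)) *
          μ ({ω | X ω > u2} ∩ Θ ⁻¹' S) := by
  obtain ⟨hpos, cp, hcp, hunif⟩ := hA3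
  set η' : ℝ := min (η / 4) (1 / 2) with hη'def
  have hη'pos : 0 < η' := lt_min (by linarith) (by norm_num)
  have hη'le : η' ≤ η / 4 := min_le_left _ _
  have hη'half : η' ≤ 1 / 2 := min_le_right _ _
  have hev : ∀ᶠ u in (atTop : Filter ℝ), ∀ θ ∈ supp μ Θ,
      dist (1 : ℝ) (cp θ u / (h θ * tail μ X u)) < η' :=
    Metric.tendstoUniformlyOn_iff.mp hunif η' hη'pos
  obtain ⟨Y0, hY0⟩ := eventually_atTop.1 hev
  refine ⟨max Y0 1, le_max_right _ _, ?_⟩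
  intro u1 u2 hu1 hu2 S hS
  have hu1' : Y0 ≤ u1 := le_trans (le_max_left _ _) hu1
  have hu2' : Y0 ≤ u2 := le_trans (le_max_left _ _) hu2
  have hu1p : (0:ℝ) ≤ u1 := le_trans (by norm_num) (le_trans (le_max_right _ _) hu1)
  have hu2p : (0:ℝ) ≤ u2 := le_trans (by norm_num) (le_trans (le_max_right _ _) hu2)
  have hF1 : 0 < tail μ X u1 := hF u1 hu1p
  have hF2 : 0 < tail μ X u2 := hF u2 hu2p
  set G : Measure ℝ := μ.map Θ with hG
  set ρ1 : Measure ℝ := (μ.restrict {ω | X ω > u1}).map Θ with hρ1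
  set ρ2 : Measure ℝ := (μ.restrict {ω | X ω > u2}).map Θ with hρ2
  have hle1 : ρ1 ≤ G := Measure.map_mono Measure.restrict_le_self hΘm
  have hle2 : ρ2 ≤ G := Measure.map_mono Measure.restrict_le_self hΘm
  have hac1 : ρ1 ≪ G := Measure.absolutelyContinuous_of_le hle1
  have hac2 : ρ2 ≪ G := Measure.absolutelyContinuous_of_le hle2
  have hGfin : IsFiniteMeasure G := by rw [hG]; exact Measure.isFiniteMeasure_map _ _
  have hρ1fin : IsFiniteMeasure ρ1 := by rw [hρ1]; exact Measure.isFiniteMeasure_map _ _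
  have hρ2fin : IsFiniteMeasure ρ2 := by rw [hρ2]; exact Measure.isFiniteMeasure_map _ _
  set c : ℝ := (1 + η) * (tail μ X u1 / tail μ X u2) with hc
  have hc0 : 0 ≤ c := by positivity
  -- a.e. pointwise bound on rnDerivs
  have haesupp : ∀ᵐ θ ∂G, θ ∈ supp μ Θ := by
    rw [ae_iff]
    exact map_compl_supp_null μ hΘm
  have hptwise : ∀ᵐ θ ∂G, ρ1.rnDeriv G θ ≤ ENNReal.ofReal c * ρ2.rnDeriv G θ := by
    filter_upwards [ae_rnDeriv_eq μ hXm hΘm (fun θ hθ => hcp θ hθ u1),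
      ae_rnDeriv_eq μ hXm hΘm (fun θ hθ => hcp θ hθ u2), haesupp] with θ h1 h2 hsupp
    obtain ⟨he1, _⟩ := h1 hsupp
    obtain ⟨he2, hcp2nn⟩ := h2 hsupp
    have hhθ : 0 < h θ := hpos θ (supp_nonneg μ hΘnn hsupp)
    have hd1 := hY0 u1 hu1' θ hsupp
    have hd2 := hY0 u2 hu2' θ hsupp
    rw [Real.dist_eq, abs_sub_lt_iff] at hd1 hd2
    have hq1 : cp θ u1 / (h θ * tail μ X u1) < 1 + η' := by linarith [hd1.2]
    have hq2 : 1 - η' < cp θ u2 / (h θ * tail μ X u2) := by linarith [hd2.1]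
    have hb1 : cp θ u1 < (1 + η') * (h θ * tail μ X u1) := by
      have := (div_lt_iff₀ (by positivity)).1 hq1
      linarith
    have hb2 : (1 - η') * (h θ * tail μ X u2) < cp θ u2 := by
      have := (lt_div_iff₀ (by positivity)).1 hq2
      linarith
    have hkey : cp θ u1 ≤ c * cp θ u2 := by
      have h1e : (1 + η') * (h θ * tail μ X u1) ≤
          c * ((1 - η') * (h θ * tail μ X u2)) := by
        rw [hc]
        have hrw : (1 + η) * (tail μ X u1 / tail μ X u2) * ((1 - η') * (h θ * tail μ X u2))
            = (1 + η) * (1 - η') * (h θ * tail μ X u1) := by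
          field_simp
        rw [hrw]
        have hfac : 1 + η' ≤ (1 + η) * (1 - η') := by nlinarith
        nlinarith [mul_pos hhθ hF1]
      have hc2 : c * ((1 - η') * (h θ * tail μ X u2)) ≤ c * cp θ u2 :=
        mul_le_mul_of_nonneg_left (le_of_lt hb2) hc0
      linarith
    rw [he1, he2, ← ENNReal.ofReal_mul hc0]
    exact ENNReal.ofReal_le_ofReal hkey
  -- integrate
  have hL : μ ({ω | X ω > u1} ∩ Θ ⁻¹' S) = ρ1 S := by
    rw [hρ1, Measure.map_apply hΘm hS, Measure.restrict_apply (hΘm hS), inter_comm]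
  have hR : μ ({ω | X ω > u2} ∩ Θ ⁻¹' S) = ρ2 S := by
    rw [hρ2, Measure.map_apply hΘm hS, Measure.restrict_apply (hΘm hS), inter_comm]
  rw [hL, hR, ← Measure.setLIntegral_rnDeriv' hac1 hS, ← Measure.setLIntegral_rnDeriv' hac2 hS]
  calc ∫⁻ θ in S, ρ1.rnDeriv G θ ∂G
      ≤ ∫⁻ θ in S, ENNReal.ofReal c * ρ2.rnDeriv G θ ∂G :=
        lintegral_mono_ae (ae_restrict_of_ae hptwise)
    _ = ENNReal.ofReal c * ∫⁻ θ in S, ρ2.rnDeriv G θ ∂G :=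
        lintegral_const_mul _ (Measure.measurable_rnDeriv _ _)


lemma exists_pos_supp (μ : Measure Ω) [IsProbabilityMeasure μ] {Θ : Ω → ℝ}
    (hΘm : Measurable Θ) (hΘnn : ∀ ω, 0 ≤ Θ ω) (hΘnd : NonDegAtZero μ Θ) :
    ∃ θ0 ∈ supp μ Θ, 0 < θ0 := by
  have hU : {ω | Θ ω ≠ 0} ⊆ ⋃ n : ℕ, {ω | Θ ω > 1 / (n + 1)} := by
    intro ω hω
    have hpos : 0 < Θ ω := lt_of_le_of_ne (hΘnn ω) (Ne.symm hω)
    obtain ⟨n, hn⟩ := exists_nat_one_div_lt hpos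
    exact mem_iUnion.2 ⟨n, hn⟩
  have hex : ∃ n : ℕ, 0 < μ {ω | Θ ω > 1 / (n + 1)} := by
    by_contra hcon
    push_neg at hcon
    simp only [nonpos_iff_eq_zero] at hcon
    have : μ {ω | Θ ω ≠ 0} = 0 :=
      le_antisymm (le_trans (measure_mono hU) (le_of_eq (measure_iUnion_null hcon)))
        zero_le
    rw [NonDegAtZero, this] at hΘnd
    exact lt_irrefl _ hΘnd
  obtain ⟨n, hn⟩ := hex
  set a : ℝ := 1 / (n + 1) with ha
  have hapos : 0 < a := by positivity
  have hGpos : 0 < μ.map Θ (Ioi a) := by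
    rw [Measure.map_apply hΘm measurableSet_Ioi]
    exact hn
  have hmeas : 0 < μ.map Θ (Ioi a ∩ supp μ Θ) := by
    by_contra hcon
    push_neg at hcon
    simp only [nonpos_iff_eq_zero] at hcon
    have : μ.map Θ (Ioi a) ≤ μ.map Θ (Ioi a ∩ supp μ Θ) + μ.map Θ (Ioi a ∩ (supp μ Θ)ᶜ) := by
      refine le_trans (le_of_eq (by rw [inter_union_compl])) (measure_union_le _ _)
    rw [hcon, zero_add] at this
    have h2 : μ.map Θ (Ioi a ∩ (supp μ Θ)ᶜ) = 0 :=
      le_antisymm (le_trans (measure_mono inter_subset_right)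
        (le_of_eq (map_compl_supp_null μ hΘm))) zero_le
    rw [h2] at this
    exact absurd (le_antisymm this zero_le) hGpos.ne'
  obtain ⟨θ0, hθ0⟩ := nonempty_of_measure_ne_zero hmeas.ne'
  exact ⟨θ0, hθ0.2, lt_trans hapos hθ0.1⟩


lemma tail_H_pos (μ : Measure Ω) [IsProbabilityMeasure μ] {X Θ : Ω → ℝ}
    (hXm : Measurable X) (hΘm : Measurable Θ) (hΘnn : ∀ ω, 0 ≤ Θ ω)
    (hΘnd : NonDegAtZero μ Θ) (hF : ∀ x : ℝ, 0 ≤ x → 0 < tail μ X x)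
    {h : ℝ → ℝ} (hA3 : A3' μ X Θ h) :
    ∃ X0 : ℝ, 1 ≤ X0 ∧ ∀ x : ℝ, X0 ≤ x → 0 < μ {ω | Θ ω * X ω > x} := by
  obtain ⟨θ0, hθ0supp, hθ0pos⟩ := exists_pos_supp μ hΘm hΘnn hΘnd
  obtain ⟨hpos, cp, hcp, hunif⟩ := hA3
  obtain ⟨Y0, hY0⟩ := eventually_atTop.1 (Metric.tendstoUniformlyOn_iff.mp hunif (1/2) (by norm_num))
  set Y1 : ℝ := max Y0 1 with hY1
  set S : Set ℝ := Icc (θ0 - θ0 / 2) (θ0 + θ0 / 2) with hSdef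
  have hSm : MeasurableSet S := measurableSet_Icc
  set G : Measure ℝ := μ.map Θ with hG
  have hGS : 0 < G S := by
    rw [hG, Measure.map_apply hΘm hSm]
    exact hθ0supp (θ0 / 2) (by linarith)
  -- for any u ≥ Y1, μ ({X > u} ∩ Θ⁻¹ S) > 0
  have hmain : ∀ u : ℝ, Y1 ≤ u → 0 < μ ({ω | X ω > u} ∩ Θ ⁻¹' S) := by
    intro u hu
    have hu0 : Y0 ≤ u := le_trans (le_max_left _ _) hu
    have hup : (0:ℝ) ≤ u := le_trans (by norm_num) (le_trans (le_max_right _ _) hu)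
    by_contra hcon
    push_neg at hcon
    simp only [nonpos_iff_eq_zero] at hcon
    set ρ : Measure ℝ := (μ.restrict {ω | X ω > u}).map Θ with hρ
    have hρS : ρ S = 0 := by
      rw [hρ, Measure.map_apply hΘm hSm, Measure.restrict_apply (hΘm hSm), inter_comm]
      exact hcon
    have hac : ρ ≪ G := Measure.absolutelyContinuous_of_le
      (Measure.map_mono Measure.restrict_le_self hΘm)
    have hGfin : IsFiniteMeasure G := by rw [hG]; exact Measure.isFiniteMeasure_map _ _
    have hρfin : IsFiniteMeasure ρ := by rw [hρ]; exact Measure.isFiniteMeasure_map _ _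
    have hint : ∫⁻ θ in S, ρ.rnDeriv G θ ∂G = 0 := by
      rw [Measure.setLIntegral_rnDeriv' hac hSm, hρS]
    have hzero : ∀ᵐ θ ∂(G.restrict S), ρ.rnDeriv G θ = 0 :=
      (lintegral_eq_zero_iff (Measure.measurable_rnDeriv _ _)).1 hint
    have haesupp : ∀ᵐ θ ∂G, θ ∈ supp μ Θ := by
      rw [ae_iff]; exact map_compl_supp_null μ hΘm
    have hposderiv : ∀ᵐ θ ∂G, θ ∈ supp μ Θ → 0 < ρ.rnDeriv G θ := by
      filter_upwards [ae_rnDeriv_eq μ hXm hΘm (fun θ hθ => hcp θ hθ u)] with θ h1 hsupp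
      obtain ⟨he, _⟩ := h1 hsupp
      have hhθ : 0 < h θ := hpos θ (supp_nonneg μ hΘnn hsupp)
      have hFu : 0 < tail μ X u := hF u hup
      have hd := hY0 u hu0 θ hsupp
      rw [Real.dist_eq, abs_sub_lt_iff] at hd
      have hq : 1 - 1/2 < cp θ u / (h θ * tail μ X u) := by linarith [hd.1]
      have hcppos : 0 < cp θ u := by
        have h2 : 0 < cp θ u / (h θ * tail μ X u) := by linarith
        by_contra hc2
        push_neg at hc2
        have : cp θ u / (h θ * tail μ X u) ≤ 0 := div_nonpos_of_nonpos_of_nonneg hc2 (by positivity)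
        linarith
      rw [he]
      exact ENNReal.ofReal_pos.2 hcppos
    have hrestr : ∀ᵐ θ ∂(G.restrict S), 0 < ρ.rnDeriv G θ := by
      refine ae_restrict_of_ae ?_
      filter_upwards [hposderiv, haesupp] with θ h1 h2 using h1 h2
    have hne : (G.restrict S) ≠ 0 := by
      intro hzero2
      have : G.restrict S univ = 0 := by rw [hzero2]; rfl
      rw [Measure.restrict_apply_univ] at this
      exact hGS.ne' this
    have : (MeasureTheory.ae (G.restrict S)).NeBot := ae_neBot.2 hne
    obtain ⟨θ, hθ1, hθ2⟩ := (hzero.and hrestr).exists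
    rw [hθ1] at hθ2
    exact lt_irrefl _ hθ2
  refine ⟨max (θ0 * Y1 / 2) 1, le_max_right _ _, ?_⟩
  intro x hx
  set u : ℝ := 2 * x / θ0 with hu
  have hx1 : (1:ℝ) ≤ x := le_trans (le_max_right _ _) hx
  have hxY : θ0 * Y1 / 2 ≤ x := le_trans (le_max_left _ _) hx
  have huY : Y1 ≤ u := by
    rw [hu]
    rw [le_div_iff₀ hθ0pos]
    nlinarith
  have hY1pos : (1:ℝ) ≤ Y1 := le_max_right _ _
  refine lt_of_lt_of_le (hmain u huY) (measure_mono ?_)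
  intro ω ⟨hXω, hΘω⟩
  simp only [mem_setOf_eq] at hXω ⊢
  have hΘlb : θ0 / 2 ≤ Θ ω := by
    have := hΘω.1
    simp only [hSdef, mem_Icc] at hΘω
    linarith [hΘω.1]
  have hupos : 0 < u := by
    rw [hu]
    have : (0:ℝ) < 2 * x := by linarith
    positivity
  have hXpos : 0 < X ω := lt_trans hupos hXω
  have h1 : θ0 / 2 * X ω ≤ Θ ω * X ω := mul_le_mul_of_nonneg_right hΘlb (le_of_lt hXpos)
  have h2 : θ0 / 2 * u < θ0 / 2 * X ω := by
    refine mul_lt_mul_of_pos_left hXω (by linarith)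
  have h3 : θ0 / 2 * u = x := by
    rw [hu]; field_simp
  linarith


lemma iUnion_geom_Ioc {r c : ℝ} (hr : 1 < r) (hc : 0 < c) :
    ⋃ k : ℕ, Ioc (c / r ^ (k + 1)) (c / r ^ k) = Ioc 0 c := by
  classical
  have hrpos : 0 < r := lt_trans one_pos hr
  ext θ
  simp only [mem_iUnion, mem_Ioc]
  constructor
  · rintro ⟨k, h1, h2⟩
    have hp : (0:ℝ) < c / r ^ (k + 1) := by positivity
    refine ⟨lt_trans hp h1, le_trans h2 ?_⟩
    rw [div_le_iff₀ (by positivity)]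
    nlinarith [one_le_pow₀ (le_of_lt hr) (n := k)]
  · rintro ⟨hθ, hθc⟩
    have hq : 1 ≤ c / θ := (one_le_div hθ).2 hθc
    have hex : ∃ m : ℕ, c / θ < r ^ m := pow_unbounded_of_one_lt (c / θ) hr
    have hmin := Nat.find_spec hex
    set k := Nat.find hex with hk
    have hkpos : k ≠ 0 := by
      intro h0
      rw [h0, pow_zero] at hmin
      linarith
    obtain ⟨m, hm⟩ := Nat.exists_eq_succ_of_ne_zero hkpos
    refine ⟨m, ?_, ?_⟩
    · rw [div_lt_iff₀ (by positivity : (0:ℝ) < r ^ (m+1))]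
      rw [div_lt_iff₀ hθ, hm, Nat.succ_eq_add_one] at hmin
      linarith [mul_comm (r ^ (m+1)) θ]
    · have hnot : ¬ (c / θ < r ^ m) := Nat.find_min hex (by omega)
      push_neg at hnot
      rw [le_div_iff₀ hθ, ← le_div_iff₀' (by positivity)] at hnot
      exact hnot


lemma disjoint_geom_Ioc {r c : ℝ} (hr : 1 < r) :
    Pairwise (Function.onFun Disjoint (fun k : ℕ => Ioc (c / r ^ (k + 1)) (c / r ^ k))) := by
  have hrpos : 0 < r := lt_trans one_pos hr
  have key : ∀ i j : ℕ, i < j →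
      Disjoint (Ioc (c / r ^ (i + 1)) (c / r ^ i)) (Ioc (c / r ^ (j + 1)) (c / r ^ j)) := by
    intro i j hij
    rcases le_or_gt c 0 with hc | hc
    · have hemp : Ioc (c / r ^ (i + 1)) (c / r ^ i) = ∅ := by
        refine Set.Ioc_eq_empty ?_
        rw [not_lt, div_le_div_iff₀ (by positivity) (by positivity)]
        have h1 : r ^ i ≤ r ^ (i+1) := pow_le_pow_right₀ (le_of_lt hr) (by omega)
        nlinarith
      rw [hemp]
      exact empty_disjoint _
    · refine Set.Ioc_disjoint_Ioc.2 ?_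
      refine le_trans (min_le_right _ _) (le_trans ?_ (le_max_left _ _))
      rw [div_le_div_iff₀ (by positivity) (by positivity)]
      have h1 : r ^ (i+1) ≤ r ^ j := pow_le_pow_right₀ (le_of_lt hr) (by omega)
      nlinarith
  intro i j hij
  rcases lt_or_gt_of_ne hij with h | h
  · exact key i j h
  · exact (key j i h).symm


lemma sum_compare (μ : Measure Ω) {A B : Set Ω} (hB : MeasurableSet B)
    {Θ : Ω → ℝ} (hΘm : Measurable Θ) {I : ℕ → Set ℝ} (hIm : ∀ k, MeasurableSet (I k))
    (hdisj : Pairwise (Function.onFun Disjoint I)) (c : ENNReal)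
    (hcomp : ∀ k, μ (A ∩ Θ ⁻¹' I k) ≤ c * μ (B ∩ Θ ⁻¹' I k)) :
    μ (A ∩ Θ ⁻¹' (⋃ k, I k)) ≤ c * μ (B ∩ Θ ⁻¹' (⋃ k, I k)) := by
  have hU : ∀ C : Set Ω, C ∩ Θ ⁻¹' (⋃ k, I k) = ⋃ k, C ∩ Θ ⁻¹' I k := by
    intro C
    rw [preimage_iUnion, inter_iUnion]
  rw [hU A, hU B]
  have hdisjB : Pairwise (Function.onFun Disjoint (fun k => B ∩ Θ ⁻¹' I k)) := by
    intro i j hij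
    exact Disjoint.inter_left' _ (Disjoint.inter_right' _
      (Disjoint.preimage Θ (hdisj hij)))
  have hmB : ∀ k, MeasurableSet (B ∩ Θ ⁻¹' I k) := fun k => hB.inter (hΘm (hIm k))
  calc μ (⋃ k, A ∩ Θ ⁻¹' I k) ≤ ∑' k, μ (A ∩ Θ ⁻¹' I k) := measure_iUnion_le _
    _ ≤ ∑' k, c * μ (B ∩ Θ ⁻¹' I k) := ENNReal.tsum_le_tsum hcomp
    _ = c * ∑' k, μ (B ∩ Θ ⁻¹' I k) := ENNReal.tsum_mul_left
    _ = c * μ (⋃ k, B ∩ Θ ⁻¹' I k) := by rw [measure_iUnion hdisjB hmB]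


lemma tail_nonneg (μ : Measure Ω) (X : Ω → ℝ) (x : ℝ) : 0 ≤ tail μ X x :=
  ENNReal.toReal_nonneg


lemma split_compare (μ : Measure Ω) [IsProbabilityMeasure μ] {X Θ : Ω → ℝ}
    (hXm : Measurable X) (hΘm : Measurable Θ) (hΘnn : ∀ ω, 0 ≤ Θ ω)
    {r ε w1 w2 : ℝ} {u1 u2 : ℕ → ℝ} {c : ENNReal}
    (hr : 1 < r) (hε : 0 < ε) {x : ℝ} (hx : 0 < x) (hw1 : 0 < w1) (hw2 : 0 < w2)
    (hu1 : ∀ k, u1 k = w1 * r ^ k / (ε * x))   -- so that Θ ≤ εx/r^k, P > w1 ⇒ X > u1 k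
    (hu2 : ∀ k, u2 k = w2 * r ^ (k+1) / (ε * x)) -- so that Θ > εx/r^(k+1), X > u2 k ⇒ P > w2
    (hkey : ∀ k, μ ({ω | X ω > u1 k} ∩ Θ ⁻¹' Ioc (ε * x / r ^ (k+1)) (ε * x / r ^ k)) ≤
      c * μ ({ω | X ω > u2 k} ∩ Θ ⁻¹' Ioc (ε * x / r ^ (k+1)) (ε * x / r ^ k))) :
    μ ({ω | Θ ω * X ω > w1} ∩ Θ ⁻¹' Ioc 0 (ε * x)) ≤ c * μ {ω | Θ ω * X ω > w2} := by
  have hrpos : 0 < r := lt_trans one_pos hr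
  have hεx : 0 < ε * x := mul_pos hε hx
  have hIm : ∀ k : ℕ, MeasurableSet (Ioc (ε * x / r ^ (k+1)) (ε * x / r ^ k)) :=
    fun k => measurableSet_Ioc
  have hPm : Measurable (fun ω => Θ ω * X ω) := hΘm.mul hXm
  have hstep : ∀ k, μ ({ω | Θ ω * X ω > w1} ∩ Θ ⁻¹' Ioc (ε * x / r ^ (k+1)) (ε * x / r ^ k)) ≤
      c * μ ({ω | Θ ω * X ω > w2} ∩ Θ ⁻¹' Ioc (ε * x / r ^ (k+1)) (ε * x / r ^ k)) := by
    intro k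
    refine le_trans (measure_mono ?_) (le_trans (hkey k) (mul_le_mul_right (measure_mono ?_) c))
    · rintro ω ⟨hP, hΘω⟩
      refine ⟨?_, hΘω⟩
      simp only [mem_setOf_eq] at hP ⊢
      obtain ⟨hl, hu⟩ := hΘω
      have hΘpos : 0 < Θ ω := lt_trans (by positivity) hl
      have hXgt : w1 / Θ ω < X ω := (div_lt_iff₀ hΘpos).2 (by rwa [mul_comm] at hP)
      refine lt_of_le_of_lt ?_ hXgt
      rw [hu1, div_le_div_iff₀ (by positivity) hΘpos]
      calc w1 * r ^ k * Θ ω ≤ w1 * r ^ k * (ε * x / r ^ k) := by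
            refine mul_le_mul_of_nonneg_left hu (by positivity)
        _ = w1 * (ε * x) := by field_simp
    · rintro ω ⟨hX, hΘω⟩
      refine ⟨?_, hΘω⟩
      simp only [mem_setOf_eq] at hX ⊢
      obtain ⟨hl, _⟩ := hΘω
      have hspos : 0 < ε * x / r ^ (k+1) := by positivity
      have hu2pos : 0 < u2 k := by
        rw [hu2]; positivity
      calc w2 = (ε * x / r ^ (k+1)) * u2 k := by
            rw [hu2]; field_simp
        _ < Θ ω * X ω := by
            refine mul_lt_mul'' hl hX (le_of_lt hspos) (le_of_lt hu2pos)
  have := sum_compare μ (A := {ω | Θ ω * X ω > w1}) (B := {ω | Θ ω * X ω > w2})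
    (measurableSet_lt measurable_const hPm) hΘm hIm (disjoint_geom_Ioc hr) c hstep
  rw [iUnion_geom_Ioc hr hεx] at this
  exact le_trans this (mul_le_mul_right (measure_mono inter_subset_left) c)


lemma tail_split (μ : Measure Ω) {X Θ : Ω → ℝ} (hΘnn : ∀ ω, 0 ≤ Θ ω)
    {w t : ℝ} (hw : 0 < w) :
    μ {ω | Θ ω * X ω > w} ≤
      μ ({ω | Θ ω * X ω > w} ∩ Θ ⁻¹' Ioc 0 t) + μ {ω | Θ ω > t} := by
  refine le_trans (measure_mono ?_) (measure_union_le _ _)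
  intro ω hω
  simp only [mem_setOf_eq] at hω
  rcases le_or_gt (Θ ω) t with hle | hgt
  · left
    refine ⟨hω, ?_, hle⟩
    rcases lt_or_eq_of_le (hΘnn ω) with hpos | heq
    · exact hpos
    · exfalso; rw [← heq, zero_mul] at hω; linarith
  · right; exact hgt


lemma domvar_H (μ : Measure Ω) [IsProbabilityMeasure μ] {X Θ : Ω → ℝ}
    (hXm : Measurable X) (hΘm : Measurable Θ)
    (hF : ∀ x : ℝ, 0 ≤ x → 0 < tail μ X x)
    (hD : DomVar μ X)
    (hΘnn : ∀ ω, 0 ≤ Θ ω) (hΘnd : NonDegAtZero μ Θ)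
    {h : ℝ → ℝ} (hA3 : A3' μ X Θ h)
    (hG : ∀ c > (0:ℝ),
      Tendsto (fun x => pr μ {ω | Θ ω > c * x} / tail μ (fun ω => Θ ω * X ω) x)
        atTop (nhds 0)) :
    DomVar μ (fun ω => Θ ω * X ω) := by
  intro b hb
  obtain ⟨hb0, hb1⟩ := hb
  set β : ℝ := b / 2 with hβ
  obtain ⟨c0, hc0⟩ := hD β ⟨by linarith, by linarith⟩
  rw [eventually_map] at hc0
  obtain ⟨T0, hT0⟩ := eventually_atTop.1 hc0
  set C : ℝ := max c0 1 with hC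
  have hC1 : (1:ℝ) ≤ C := le_max_right _ _
  obtain ⟨Y, hY1, hkey⟩ := key μ hXm hΘm hΘnn hF hA3 (one_pos)
  set M : ℝ := Y + max T0 0 + 1 with hM
  have hM1 : (1:ℝ) ≤ M := by
    have := le_max_right T0 0
    simp only [hM]; linarith
  set ε : ℝ := b / M with hε
  have hεpos : 0 < ε := div_pos hb0 (by linarith)
  set u1 : ℕ → ℝ := fun k => b * 2 ^ k / ε with hu1def
  set u2 : ℕ → ℝ := fun k => 2 ^ (k+1) / ε with hu2def
  have hu1Y : ∀ k, Y ≤ u1 k := by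
    intro k
    have h2k : (1:ℝ) ≤ 2 ^ k := one_le_pow₀ (by norm_num)
    have heq : u1 k = 2 ^ k * M := by
      rw [hu1def, hε]; field_simp
    have hYM : Y ≤ M := by
      simp only [hM]; linarith [le_max_right T0 0]
    have hMM : M ≤ 2 ^ k * M := le_mul_of_one_le_left (by linarith) h2k
    rw [heq]
    linarith
  have hu2YT : ∀ k, Y ≤ u2 k ∧ T0 ≤ u2 k := by
    intro k
    have h2k : (2:ℝ) ≤ 2 ^ (k+1) := by
      calc (2:ℝ) = 2 ^ 1 := (pow_one 2).symm
      _ ≤ 2 ^ (k+1) := pow_le_pow_right₀ (by norm_num) (by omega)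
    have hb1' : 1 / b ≥ 1 := by
      rw [ge_iff_le, le_div_iff₀ hb0]; linarith
    have hval : u2 k = 2 ^ (k+1) * M / b := by
      rw [hu2def, hε]; field_simp
    have hge : 2 * M ≤ u2 k := by
      rw [hval, le_div_iff₀ hb0]
      nlinarith
    constructor
    · nlinarith [le_max_right T0 0]
    · nlinarith [le_max_left T0 0]
  -- per-k key bound with uniform constant
  have hkey2 : ∀ x : ℝ, 0 < x → ∀ k : ℕ,
      μ ({ω | X ω > u1 k} ∩ Θ ⁻¹' Ioc (ε * x / 2 ^ (k+1)) (ε * x / 2 ^ k)) ≤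
        ENNReal.ofReal (2 * C) *
          μ ({ω | X ω > u2 k} ∩ Θ ⁻¹' Ioc (ε * x / 2 ^ (k+1)) (ε * x / 2 ^ k)) := by
    intro x hx k
    have h1 := hkey (u1 k) (u2 k) (hu1Y k) (hu2YT k).1
      (Ioc (ε * x / 2 ^ (k+1)) (ε * x / 2 ^ k)) measurableSet_Ioc
    refine le_trans h1 (mul_le_mul_left (ENNReal.ofReal_le_ofReal ?_) _)
    have hu2nn : (0:ℝ) ≤ u2 k := le_trans (by linarith) (hu2YT k).1
    have hF2 : 0 < tail μ X (u2 k) := hF _ hu2nn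
    have hβu : u1 k = β * u2 k := by
      rw [hu1def, hu2def, hβ]
      field_simp
      ring
    have hrat : tail μ X (u1 k) ≤ C * tail μ X (u2 k) := by
      have this : tail μ X (β * u2 k) / tail μ X (u2 k) ≤ c0 := hT0 (u2 k) (hu2YT k).2
      rw [div_le_iff₀ hF2] at this
      rw [hβu]
      calc tail μ X (β * u2 k) ≤ c0 * tail μ X (u2 k) := this
        _ ≤ C * tail μ X (u2 k) := by
            refine mul_le_mul_of_nonneg_right (le_max_left _ _) (le_of_lt hF2)
    have hdiv : tail μ X (u1 k) / tail μ X (u2 k) ≤ C := (div_le_iff₀ hF2).2 hrat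
    linarith
  -- eventual bound
  obtain ⟨X0, hX01, hX0⟩ := tail_H_pos μ hXm hΘm hΘnn hΘnd hF hA3
  have hGev : ∀ᶠ x : ℝ in atTop,
      pr μ {ω | Θ ω > ε * x} / tail μ (fun ω => Θ ω * X ω) x < 1 :=
    (hG ε hεpos).eventually_lt_const one_pos
  refine ⟨2 * C + 1, ?_⟩
  rw [eventually_map]
  filter_upwards [eventually_ge_atTop X0, eventually_gt_atTop 0, hGev] with x hxX0 hxpos hrat
  have hHpos : 0 < tail μ (fun ω => Θ ω * X ω) x :=
    ENNReal.toReal_pos (hX0 x hxX0).ne' (measure_ne_top μ _)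
  have hbx : 0 < b * x := mul_pos hb0 hxpos
  have hsc := split_compare μ hXm hΘm hΘnn (r := 2) (w1 := b * x) (w2 := x)
      (u1 := u1) (u2 := u2) (c := ENNReal.ofReal (2 * C))
      (by norm_num) hεpos hxpos hbx hxpos
      (fun k => by rw [hu1def]; field_simp)
      (fun k => by rw [hu2def]; field_simp)
      (hkey2 x hxpos)
  have hsplit := tail_split μ (X := X) hΘnn (w := b * x) (t := ε * x) hbx
  have hENN : μ {ω | Θ ω * X ω > b * x} ≤
      ENNReal.ofReal (2 * C) * μ {ω | Θ ω * X ω > x} + μ {ω | Θ ω > ε * x} :=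
    le_trans hsplit (add_le_add_left hsc _)
  have hmulfin : ENNReal.ofReal (2 * C) * μ {ω | Θ ω * X ω > x} ≠ ⊤ :=
    ENNReal.mul_ne_top ENNReal.ofReal_ne_top (measure_ne_top μ _)
  have hfin : ENNReal.ofReal (2 * C) * μ {ω | Θ ω * X ω > x} + μ {ω | Θ ω > ε * x} ≠ ⊤ :=
    ENNReal.add_ne_top.2 ⟨hmulfin, measure_ne_top μ _⟩
  have hreal : tail μ (fun ω => Θ ω * X ω) (b * x) ≤
      2 * C * tail μ (fun ω => Θ ω * X ω) x + pr μ {ω | Θ ω > ε * x} := by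
    have hmono := ENNReal.toReal_mono hfin hENN
    rwa [ENNReal.toReal_add hmulfin (measure_ne_top μ _), ENNReal.toReal_mul,
      ENNReal.toReal_ofReal (by linarith)] at hmono
  have hGle : pr μ {ω | Θ ω > ε * x} ≤ tail μ (fun ω => Θ ω * X ω) x := by
    have := (div_lt_one hHpos).1 hrat
    linarith
  rw [div_le_iff₀ hHpos]
  calc tail μ (fun ω => Θ ω * X ω) (b * x)
      ≤ 2 * C * tail μ (fun ω => Θ ω * X ω) x + tail μ (fun ω => Θ ω * X ω) x := by linarith
    _ = (2 * C + 1) * tail μ (fun ω => Θ ω * X ω) x := by ring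


lemma lower_H (μ : Measure Ω) [IsProbabilityMeasure μ] {X Θ : Ω → ℝ}
    (hXm : Measurable X) (hΘm : Measurable Θ)
    (hF : ∀ x : ℝ, 0 ≤ x → 0 < tail μ X x)
    (hΘnn : ∀ ω, 0 ≤ Θ ω) (hΘnd : NonDegAtZero μ Θ)
    {h : ℝ → ℝ} (hA3 : A3' μ X Θ h)
    (hG : ∀ c > (0:ℝ),
      Tendsto (fun x => pr μ {ω | Θ ω > c * x} / tail μ (fun ω => Θ ω * X ω) x)
        atTop (nhds 0))
    {v r η γ' a : ℝ} (hv : 1 < v) (hr : 1 < r) (hη : 0 < η) (hγ0 : 0 < γ') (hγ1 : γ' < 1)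
    (ha : ∀ᶠ t in (atTop : Filter ℝ), a ≤ tail μ X (v * r * t) / tail μ X t) :
    ∀ᶠ x in (atTop : Filter ℝ), a / (1 + η) * (1 - γ') ≤
      tail μ (fun ω => Θ ω * X ω) (v * x) / tail μ (fun ω => Θ ω * X ω) x := by
  rcases le_or_gt a 0 with ha0 | ha0
  · refine Eventually.of_forall (fun x => ?_)
    have h1 : a / (1 + η) * (1 - γ') ≤ 0 := by
      have : a / (1 + η) ≤ 0 := div_nonpos_of_nonpos_of_nonneg ha0 (by linarith)
      nlinarith
    exact le_trans h1 (div_nonneg (tail_nonneg _ _ _) (tail_nonneg _ _ _))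
  obtain ⟨Y, hY1, hkey⟩ := key μ hXm hΘm hΘnn hF hA3 hη
  obtain ⟨T1, hT1⟩ := eventually_atTop.1 ha
  set M : ℝ := Y + max T1 0 + 1 with hM
  have hM1 : (1:ℝ) ≤ M := by
    have := le_max_right T1 0; simp only [hM]; linarith
  set ε : ℝ := 1 / M with hε
  have hεpos : 0 < ε := by rw [hε]; positivity
  have hrpos : (0:ℝ) < r := by linarith
  have hvpos : (0:ℝ) < v := by linarith
  set u1 : ℕ → ℝ := fun k => r ^ k / ε with hu1def
  set u2 : ℕ → ℝ := fun k => v * r ^ (k+1) / ε with hu2def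
  have hu1M : ∀ k, M ≤ u1 k := by
    intro k
    have h1 : (1:ℝ) ≤ r ^ k := one_le_pow₀ (le_of_lt hr)
    have : u1 k = r ^ k * M := by rw [hu1def, hε]; field_simp
    rw [this]
    nlinarith
  have hu1Y : ∀ k, Y ≤ u1 k := by
    intro k
    have := hu1M k
    have : Y ≤ M := by simp only [hM]; linarith [le_max_right T1 0]
    linarith [hu1M k]
  have hu21 : ∀ k, u2 k = v * r * u1 k := by
    intro k
    rw [hu1def, hu2def]
    field_simp
    ring
  have hu2Y : ∀ k, Y ≤ u2 k := by
    intro k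
    rw [hu21]
    have h1 := hu1Y k
    have h2 : (1:ℝ) ≤ v * r := by nlinarith
    nlinarith [lt_of_lt_of_le (show (0:ℝ) < Y by linarith) (hu1Y k)]
  -- per-k bound
  have hkey2 : ∀ x : ℝ, 0 < x → ∀ k : ℕ,
      μ ({ω | X ω > u1 k} ∩ Θ ⁻¹' Ioc (ε * x / r ^ (k+1)) (ε * x / r ^ k)) ≤
        ENNReal.ofReal ((1 + η) / a) *
          μ ({ω | X ω > u2 k} ∩ Θ ⁻¹' Ioc (ε * x / r ^ (k+1)) (ε * x / r ^ k)) := by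
    intro x hx k
    have h1 := hkey (u1 k) (u2 k) (hu1Y k) (hu2Y k)
      (Ioc (ε * x / r ^ (k+1)) (ε * x / r ^ k)) measurableSet_Ioc
    refine le_trans h1 (mul_le_mul_left (ENNReal.ofReal_le_ofReal ?_) _)
    have hu1nn : (0:ℝ) ≤ u1 k := le_trans (by linarith) (hu1Y k)
    have hF1 : 0 < tail μ X (u1 k) := hF _ hu1nn
    have hrat : a ≤ tail μ X (u2 k) / tail μ X (u1 k) := by
      have h2 : tail μ X (v * r * u1 k) / tail μ X (u1 k) ≥ a := by
        refine hT1 (u1 k) ?_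
        have := hu1M k
        have : T1 ≤ M := by simp only [hM]; linarith [le_max_left T1 0]
        linarith [hu1M k]
      rw [hu21]
      exact h2
    have hrat' : a * tail μ X (u1 k) ≤ tail μ X (u2 k) := by
      rw [le_div_iff₀ hF1] at hrat
      exact hrat
    have hF2pos : 0 < tail μ X (u2 k) := lt_of_lt_of_le (mul_pos ha0 hF1) hrat'
    have hdiv : tail μ X (u1 k) / tail μ X (u2 k) ≤ 1 / a := by
      rw [div_le_div_iff₀ hF2pos ha0]
      nlinarith
    have h1η : (0:ℝ) < 1 + η := by linarith
    calc (1 + η) * (tail μ X (u1 k) / tail μ X (u2 k)) ≤ (1 + η) * (1/a) :=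
          mul_le_mul_of_nonneg_left hdiv (le_of_lt h1η)
      _ = (1 + η) / a := by ring
  obtain ⟨X0, hX01, hX0⟩ := tail_H_pos μ hXm hΘm hΘnn hΘnd hF hA3
  have hGev : ∀ᶠ x : ℝ in atTop,
      pr μ {ω | Θ ω > ε * x} / tail μ (fun ω => Θ ω * X ω) x < γ' :=
    (hG ε hεpos).eventually_lt_const hγ0
  filter_upwards [eventually_ge_atTop X0, eventually_gt_atTop 0, hGev] with x hxX0 hxpos hrat
  have hHpos : 0 < tail μ (fun ω => Θ ω * X ω) x :=
    ENNReal.toReal_pos (hX0 x hxX0).ne' (measure_ne_top μ _)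
  have hsc := split_compare μ hXm hΘm hΘnn (r := r) (w1 := x) (w2 := v * x)
      (u1 := u1) (u2 := u2) (c := ENNReal.ofReal ((1 + η) / a))
      hr hεpos hxpos hxpos (mul_pos hvpos hxpos)
      (fun k => by rw [hu1def]; field_simp)
      (fun k => by rw [hu2def]; field_simp)
      (hkey2 x hxpos)
  have hsplit := tail_split μ (X := X) hΘnn (w := x) (t := ε * x) hxpos
  have hENN : μ {ω | Θ ω * X ω > x} ≤
      ENNReal.ofReal ((1 + η) / a) * μ {ω | Θ ω * X ω > v * x} + μ {ω | Θ ω > ε * x} :=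
    le_trans hsplit (add_le_add_left hsc _)
  have hmulfin : ENNReal.ofReal ((1 + η) / a) * μ {ω | Θ ω * X ω > v * x} ≠ ⊤ :=
    ENNReal.mul_ne_top ENNReal.ofReal_ne_top (measure_ne_top μ _)
  have hfin : ENNReal.ofReal ((1 + η) / a) * μ {ω | Θ ω * X ω > v * x} + μ {ω | Θ ω > ε * x} ≠ ⊤ :=
    ENNReal.add_ne_top.2 ⟨hmulfin, measure_ne_top μ _⟩
  have hreal : tail μ (fun ω => Θ ω * X ω) x ≤
      (1 + η) / a * tail μ (fun ω => Θ ω * X ω) (v * x) + pr μ {ω | Θ ω > ε * x} := by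
    have hmono := ENNReal.toReal_mono hfin hENN
    rwa [ENNReal.toReal_add hmulfin (measure_ne_top μ _), ENNReal.toReal_mul,
      ENNReal.toReal_ofReal (by positivity)] at hmono
  have hGle : pr μ {ω | Θ ω > ε * x} ≤ γ' * tail μ (fun ω => Θ ω * X ω) x := by
    rw [div_lt_iff₀ hHpos] at hrat
    linarith
  rw [le_div_iff₀ hHpos]
  have h1η : (0:ℝ) < 1 + η := by linarith
  have hkey3 : (1 - γ') * tail μ (fun ω => Θ ω * X ω) x ≤
      (1 + η) / a * tail μ (fun ω => Θ ω * X ω) (v * x) := by linarith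
  have := mul_le_mul_of_nonneg_left hkey3 (le_of_lt (div_pos ha0 h1η))
  calc a / (1 + η) * (1 - γ') * tail μ (fun ω => Θ ω * X ω) x
      = a / (1 + η) * ((1 - γ') * tail μ (fun ω => Θ ω * X ω) x) := by ring
    _ ≤ a / (1 + η) * ((1 + η) / a * tail μ (fun ω => Θ ω * X ω) (v * x)) := this
    _ = tail μ (fun ω => Θ ω * X ω) (v * x) := by field_simp


lemma tail_antitone (μ : Measure Ω) [IsFiniteMeasure μ] (Z : Ω → ℝ) :
    Antitone (tail μ Z) := by
  intro y z hyz
  refine ENNReal.toReal_mono (measure_ne_top μ _) (measure_mono ?_)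
  intro ω hω
  simp only [mem_setOf_eq] at hω ⊢
  linarith


lemma ratio_bounded_below (μ : Measure Ω) (Z : Ω → ℝ) (v : ℝ) :
    IsBoundedUnder (· ≥ ·) (atTop : Filter ℝ) (fun x => tail μ Z (v * x) / tail μ Z x) := by
  refine ⟨0, ?_⟩
  rw [eventually_map]
  refine Eventually.of_forall (fun x => ?_)
  simp only [ge_iff_le]
  exact div_nonneg (tail_nonneg _ _ _) (tail_nonneg _ _ _)


lemma ratio_le_one (μ : Measure Ω) [IsFiniteMeasure μ] (Z : Ω → ℝ)
    {v : ℝ} (hv : 1 ≤ v) :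
    ∀ᶠ x in (atTop : Filter ℝ), tail μ Z (v * x) / tail μ Z x ≤ 1 := by
  filter_upwards [eventually_ge_atTop (0:ℝ)] with x hx
  rcases eq_or_lt_of_le (tail_nonneg μ Z x) with h0 | hpos
  · rw [div_eq_zero_iff.2]
    · norm_num
    · right; exact h0.symm
  · refine (div_le_one hpos).2 (tail_antitone μ Z ?_)
    nlinarith


lemma ratio_bounded_above (μ : Measure Ω) [IsFiniteMeasure μ] (Z : Ω → ℝ)
    {v : ℝ} (hv : 1 ≤ v) :
    IsBoundedUnder (· ≤ ·) (atTop : Filter ℝ) (fun x => tail μ Z (v * x) / tail μ Z x) :=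
  ⟨1, by rw [eventually_map]; exact ratio_le_one μ Z hv⟩


lemma liminf_ratio_le_one (μ : Measure Ω) [IsFiniteMeasure μ] (Z : Ω → ℝ)
    {v : ℝ} (hv : 1 ≤ v) :
    liminf (fun x => tail μ Z (v * x) / tail μ Z x) atTop ≤ 1 := by
  have hcb : IsCoboundedUnder (· ≥ ·) (atTop : Filter ℝ) (fun _ : ℝ => (1:ℝ)) := by
    refine IsBoundedUnder.isCoboundedUnder_ge ⟨1, ?_⟩
    rw [eventually_map]
    exact Eventually.of_forall (fun _ => le_refl 1)
  have h := liminf_le_liminf (ratio_le_one μ Z hv) (ratio_bounded_below μ Z v) hcb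
  rwa [liminf_const] at h


lemma liminf_ratio_antitoneOn (μ : Measure Ω) [IsFiniteMeasure μ] (Z : Ω → ℝ)
    (hpos : ∀ᶠ x in (atTop : Filter ℝ), 0 < tail μ Z x) :
    AntitoneOn (fun v => liminf (fun x => tail μ Z (v * x) / tail μ Z x) atTop)
      (Ioi (1:ℝ)) := by
  intro v hv w hw hvw
  simp only
  refine liminf_le_liminf ?_ (ratio_bounded_below μ Z w)
    ((ratio_bounded_above μ Z (le_of_lt hv)).isCoboundedUnder_ge)
  filter_upwards [eventually_ge_atTop (0:ℝ), hpos] with x hx hposx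
  refine div_le_div_of_nonneg_right (tail_antitone μ Z ?_) (tail_nonneg μ Z x)
  exact mul_le_mul_of_nonneg_right hvw hx


lemma antitoneOn_tendsto_sSup {f : ℝ → ℝ} (hf : AntitoneOn f (Ioi 1))
    (hbdd : ∀ v ∈ Ioi (1:ℝ), f v ≤ 1) :
    Tendsto f (nhdsWithin 1 (Ioi 1)) (nhds (sSup (f '' Ioi 1))) := by
  have hne : (f '' Ioi 1).Nonempty := ⟨f 2, ⟨2, by norm_num, rfl⟩⟩
  have hba : BddAbove (f '' Ioi 1) := ⟨1, fun y ⟨v, hv, hvy⟩ => hvy ▸ hbdd v hv⟩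
  refine tendsto_order.2 ⟨?_, ?_⟩
  · intro c hc
    obtain ⟨y, ⟨v0, hv0, rfl⟩, hcy⟩ := exists_lt_of_lt_csSup hne hc
    have hmem : Ioo (1:ℝ) v0 ∈ nhdsWithin 1 (Ioi 1) :=
      Ioo_mem_nhdsGT_of_mem ⟨le_refl 1, hv0⟩
    filter_upwards [hmem] with v hv
    exact lt_of_lt_of_le hcy (hf hv.1 hv0 (le_of_lt hv.2))
  · intro c hc
    filter_upwards [self_mem_nhdsWithin] with v hv
    exact lt_of_le_of_lt (le_csSup hba ⟨v, hv, rfl⟩) hc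


lemma liminf_lower (μ : Measure Ω) [IsProbabilityMeasure μ] {X Θ : Ω → ℝ}
    (hXm : Measurable X) (hΘm : Measurable Θ)
    (hF : ∀ x : ℝ, 0 ≤ x → 0 < tail μ X x)
    (hΘnn : ∀ ω, 0 ≤ Θ ω) (hΘnd : NonDegAtZero μ Θ)
    {h : ℝ → ℝ} (hA3 : A3' μ X Θ h)
    (hG : ∀ c > (0:ℝ),
      Tendsto (fun x => pr μ {ω | Θ ω > c * x} / tail μ (fun ω => Θ ω * X ω) x)
        atTop (nhds 0))
    {v r : ℝ} (hv : 1 < v) (hr : 1 < r) :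
    liminf (fun x => tail μ X (v * r * x) / tail μ X x) atTop ≤
      liminf (fun x => tail μ (fun ω => Θ ω * X ω) (v * x) /
        tail μ (fun ω => Θ ω * X ω) x) atTop := by
  set L : ℝ := liminf (fun x => tail μ X (v * r * x) / tail μ X x) atTop with hL
  set δ : ℕ → ℝ := fun n => 1 / ((n:ℝ) + 2) with hδ
  have hδpos : ∀ n, 0 < δ n := by intro n; rw [hδ]; positivity
  have hδlt1 : ∀ n, δ n < 1 := by
    intro n
    rw [hδ, div_lt_one (by positivity)]
    have : (0:ℝ) ≤ (n:ℝ) := Nat.cast_nonneg n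
    linarith
  have hδ0 : Tendsto δ atTop (nhds 0) := by
    rw [hδ]
    simp only [one_div]
    refine Tendsto.inv_tendsto_atTop ?_
    exact tendsto_atTop_add_const_right _ 2 tendsto_natCast_atTop_atTop
  -- for each n, the lower bound
  have hstep : ∀ n : ℕ, (L - δ n) / (1 + δ n) * (1 - δ n) ≤
      liminf (fun x => tail μ (fun ω => Θ ω * X ω) (v * x) /
        tail μ (fun ω => Θ ω * X ω) x) atTop := by
    intro n
    have ha : ∀ᶠ t in (atTop : Filter ℝ), L - δ n ≤ tail μ X (v * r * t) / tail μ X t := by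
      have hlt : L - δ n < L := by linarith [hδpos n]
      filter_upwards [eventually_lt_of_lt_liminf hlt (ratio_bounded_below μ X (v*r))]
        with t ht using le_of_lt ht
    have hev := lower_H μ hXm hΘm hF hΘnn hΘnd hA3 hG hv hr (hδpos n) (hδpos n) (hδlt1 n) ha
    refine le_liminf_of_le ?_ hev
    refine IsBoundedUnder.isCoboundedUnder_ge (ratio_bounded_above μ _ (le_of_lt hv))
  -- take the limit in n
  have htend : Tendsto (fun n => (L - δ n) / (1 + δ n) * (1 - δ n)) atTop
      (nhds ((L - 0) / (1 + 0) * (1 - 0))) := by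
    refine Tendsto.mul (Tendsto.div (Tendsto.sub tendsto_const_nhds hδ0)
      (Tendsto.add tendsto_const_nhds hδ0) (by norm_num)) ?_
    exact Tendsto.sub tendsto_const_nhds hδ0
  have : (L - 0) / (1 + 0) * (1 - 0) = L := by ring
  rw [this] at htend
  exact le_of_tendsto htend (Eventually.of_forall hstep)


lemma lindex_le (μ : Measure Ω) [IsProbabilityMeasure μ] {X Θ : Ω → ℝ}
    (hXm : Measurable X) (hΘm : Measurable Θ)
    (hF : ∀ x : ℝ, 0 ≤ x → 0 < tail μ X x)
    (hΘnn : ∀ ω, 0 ≤ Θ ω) (hΘnd : NonDegAtZero μ Θ)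
    {h : ℝ → ℝ} (hA3 : A3' μ X Θ h)
    (hG : ∀ c > (0:ℝ),
      Tendsto (fun x => pr μ {ω | Θ ω > c * x} / tail μ (fun ω => Θ ω * X ω) x)
        atTop (nhds 0)) :
    Lindex μ X ≤ Lindex μ (fun ω => Θ ω * X ω) := by
  set fF : ℝ → ℝ := fun v => liminf (fun x => tail μ X (v * x) / tail μ X x) atTop with hfF
  set fH : ℝ → ℝ := fun v => liminf (fun x => tail μ (fun ω => Θ ω * X ω) (v * x) /
    tail μ (fun ω => Θ ω * X ω) x) atTop with hfH
  have hposX : ∀ᶠ x in (atTop : Filter ℝ), 0 < tail μ X x :=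
    eventually_atTop.2 ⟨0, hF⟩
  obtain ⟨X0, hX01, hX0⟩ := tail_H_pos μ hXm hΘm hΘnn hΘnd hF hA3
  have hposH : ∀ᶠ x in (atTop : Filter ℝ), 0 < tail μ (fun ω => Θ ω * X ω) x :=
    eventually_atTop.2 ⟨X0, fun x hx =>
      ENNReal.toReal_pos (hX0 x hx).ne' (measure_ne_top μ _)⟩
  have hFanti := liminf_ratio_antitoneOn μ X hposX
  have hHanti := liminf_ratio_antitoneOn μ (fun ω => Θ ω * X ω) hposH
  have hFbdd : ∀ v ∈ Ioi (1:ℝ), fF v ≤ 1 := fun v hv =>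
    liminf_ratio_le_one μ X (le_of_lt hv)
  have hHbdd : ∀ v ∈ Ioi (1:ℝ), fH v ≤ 1 := fun v hv =>
    liminf_ratio_le_one μ (fun ω => Θ ω * X ω) (le_of_lt hv)
  have htF := antitoneOn_tendsto_sSup hFanti hFbdd
  have htH := antitoneOn_tendsto_sSup hHanti hHbdd
  have hLF : Lindex μ X = sSup (fF '' Ioi 1) := htF.limUnder_eq
  have hLH : Lindex μ (fun ω => Θ ω * X ω) = sSup (fH '' Ioi 1) := htH.limUnder_eq
  rw [hLF, hLH]
  have hneF : (fF '' Ioi 1).Nonempty := ⟨fF 2, ⟨2, by norm_num, rfl⟩⟩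
  have hbaH : BddAbove (fH '' Ioi 1) := ⟨1, fun y ⟨v, hv, hvy⟩ => hvy ▸ hHbdd v hv⟩
  refine csSup_le hneF ?_
  rintro y ⟨w, hw, rfl⟩
  simp only [mem_Ioi] at hw
  set s : ℝ := Real.sqrt w with hs
  have hwpos : (0:ℝ) < w := lt_trans one_pos hw
  have hs1 : 1 < s := by
    rw [hs]
    rw [show (1:ℝ) = Real.sqrt 1 by simp]
    exact Real.sqrt_lt_sqrt (by norm_num) hw
  have hss : s * s = w := Real.mul_self_sqrt (le_of_lt hwpos)
  have hmain := liminf_lower μ hXm hΘm hF hΘnn hΘnd hA3 hG hs1 hs1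
  simp only [hss] at hmain
  refine le_trans hmain (le_csSup hbaH ⟨s, hs1, rfl⟩)


/-- Lemma 3: if `F ∈ 𝒟`, Assumption A3' holds and `Ḡ(cx) = o(H̄(x))` for
every `c > 0`, where `H` is the distribution of `ΘX`, then `H ∈ 𝒟` and `L_H ≥ L_F`. -/
theorem statement_13
    (μ : Measure Ω) [IsProbabilityMeasure μ]
    (X Θ : Ω → ℝ)
    (hXm : Measurable X) (hΘm : Measurable Θ)
    (hF : ∀ x : ℝ, 0 ≤ x → 0 < tail μ X x)
    (hD : DomVar μ X)
    (hΘnn : ∀ ω, 0 ≤ Θ ω) (hΘnd : NonDegAtZero μ Θ)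
    (h : ℝ → ℝ) (hA3 : A3' μ X Θ h)
    (hG : ∀ c > (0:ℝ),
      Tendsto (fun x => pr μ {ω | Θ ω > c * x} / tail μ (fun ω => Θ ω * X ω) x)
        atTop (nhds 0)) :
    DomVar μ (fun ω => Θ ω * X ω) ∧
      Lindex μ X ≤ Lindex μ (fun ω => Θ ω * X ω) := by
  exact ⟨domvar_H μ hXm hΘm hF hD hΘnn hΘnd hA3 hG,
    lindex_le μ hXm hΘm hF hΘnn hΘnd hA3 hG⟩

end RWS
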